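/- Let S be a stabilizer group on n qubits satisfying T^{⊗n} Π_S (T^{⊗n})† = Π_S. Let z ∈ F_2^n and ε ∈ {±1} be such that ε E(0,z) commutes with every element of S, ε E(0,z) ∉ S, and −I is not contained in the group S′ generated by S and ε E(0,z). Then S′ is a stabilizer group and T^{⊗n} Π_{S′} (T^{⊗n})† = Π_{S′}; in particular, Π_{S′} = Π_S · (I + ε E(0,z))/2 and the transversal-T property is preserved by adjoining any such Z-type generator. -/

import Mathlib

open Matrix BigOperators

section Binary

variable {ι : Type*} [Fintype ι] [DecidableEq ι]

/-- Hamming weight of a binary vector. -/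
def wH (x : ι → ZMod 2) : ℕ := (Finset.univ.filter fun j => x j = 1).card

/-- `supportLE y x` means `supp(y) ⊆ supp(x)`, i.e. `y ⪯ x`. -/
def supportLE (y x : ι → ZMod 2) : Prop := ∀ j, y j = 1 → x j = 1

instance (x : ι → ZMod 2) : DecidablePred (fun y : ι → ZMod 2 => supportLE y x) :=
  fun _ => inferInstanceAs (Decidable (∀ j, _ = 1 → x j = 1))

/-- The mod-2 inner product `x yᵀ = ∑ j, x j * y j`. -/
def binInner (x y : ι → ZMod 2) : ZMod 2 := ∑ j, x j * y j

/-- The dual code `C^⊥ = {y : x yᵀ = 0 for all x ∈ C}`. -/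
def dualCode (C : Submodule (ZMod 2) (ι → ZMod 2)) : Submodule (ZMod 2) (ι → ZMod 2) where
  carrier := { y | ∀ x ∈ C, binInner x y = 0 }
  add_mem' := by
    intro a b ha hb x hx
    have h : binInner x (a + b) = binInner x a + binInner x b := by
      simp [binInner, mul_add, Finset.sum_add_distrib]
    rw [h, ha x hx, hb x hx, add_zero]
  zero_mem' := by
    intro x hx
    simp [binInner]
  smul_mem' := by
    intro c a ha x hx
    have h : binInner x (c • a) = c * binInner x a := by
      simp only [binInner, Pi.smul_apply, smul_eq_mul, Finset.mul_sum]
      exact Finset.sum_congr rfl fun j _ => by ring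
    rw [h, ha x hx, mul_zero]

/-- A CSS-T pair of binary linear codes: `C₂ ⊆ C₁`, every codeword of `C₂` has even
weight, and for each `x ∈ C₂` there is a self-dual code in `C₁^⊥`, of dimension
`w_H(x)/2`, supported on `x`. -/
def CSST (C₁ C₂ : Submodule (ZMod 2) (ι → ZMod 2)) : Prop :=
  C₂ ≤ C₁ ∧
  (∀ x ∈ C₂, Even (wH x)) ∧
  (∀ x ∈ C₂, ∃ Cx : Submodule (ZMod 2) (ι → ZMod 2),
    Cx ≤ dualCode C₁ ∧
    2 * Module.finrank (ZMod 2) Cx = wH x ∧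
    (∀ z ∈ Cx, supportLE z x) ∧
    (∀ y ∈ Cx, ∀ z ∈ Cx, binInner y z = 0))

/-- A family of rows is triorthogonal if all pairs and triples of distinct rows have
even overlap. -/
def Triorthogonal {p : ℕ} (g : Fin p → ι → ZMod 2) : Prop :=
  (∀ a b : Fin p, a < b → Even (wH (g a * g b))) ∧
  (∀ a b c : Fin p, a < b → b < c → Even (wH (g a * g b * g c)))

end Binary

/-- Binary vectors of length `n`. -/
abbrev V (n : ℕ) := Fin n → ZMod 2

/-- The Hermitian `n`-qubit Pauli matrix
`E(a,b) = ⊗_j i^{a_j b_j} X^{a_j} Z^{b_j}`, written entrywise: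
`E(a,b)[u,v] = i^{∑ a_j b_j} · 1[u = v ⊕ a] · (−1)^{∑ b_j v_j}`. -/
def PauliE {n : ℕ} (a b : V n) : Matrix (V n) (V n) ℂ :=
  Matrix.of fun u v =>
    Complex.I ^ (∑ j, (a j).val * (b j).val) *
      (if u = v + a then 1 else 0) *
      (-1 : ℂ) ^ (∑ j, (b j).val * (v j).val)

/-- The transversal `T` gate `T^{⊗n}`, where `T = diag(1, e^{iπ/4})`; it is the diagonal
matrix whose entry at `v` is `e^{iπ w_H(v)/4}`. -/
noncomputable def transT (n : ℕ) : Matrix (V n) (V n) ℂ :=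
  Matrix.diagonal fun v : V n => Complex.exp ((Real.pi : ℂ) * Complex.I / 4) ^ wH v

/-- `ε` is a sign `±1`. -/
def IsSign (ε : ℂ) : Prop := ε = 1 ∨ ε = -1

/-- A stabilizer group on `n` qubits, given as the finite set of its elements:
each element is `±E(a,b)`, the set is closed under multiplication, abelian,
nonempty (hence contains the identity), and does not contain `−I`. -/
def IsStabilizer (n : ℕ) (S : Finset (Matrix (V n) (V n) ℂ)) : Prop :=
  S.Nonempty ∧
  (∀ g ∈ S, ∃ (ε : ℂ) (a b : V n), IsSign ε ∧ g = ε • PauliE a b) ∧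
  (∀ g ∈ S, ∀ h ∈ S, g * h ∈ S) ∧
  (∀ g ∈ S, ∀ h ∈ S, g * h = h * g) ∧
  (-1 : Matrix (V n) (V n) ℂ) ∉ S

/-- The code projector `Π_S = |S|⁻¹ ∑_{g ∈ S} g  (= 2^{−r} ∑_j ε_j E(a_j,b_j))`. -/
noncomputable def stabProj {n : ℕ} (S : Finset (Matrix (V n) (V n) ℂ)) :
    Matrix (V n) (V n) ℂ :=
  (S.card : ℂ)⁻¹ • ∑ g ∈ S, g

noncomputable instance {n : ℕ} : DecidableEq (Matrix (V n) (V n) ℂ) := Classical.decEq _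


lemma isSign_ne_zero {a : ℂ} (ha : IsSign a) : a ≠ 0 := by
  rcases ha with rfl | rfl <;> norm_num

lemma isSign_mul {a b : ℂ} (ha : IsSign a) (hb : IsSign b) : IsSign (a * b) := by
  rcases ha with rfl | rfl <;> rcases hb with rfl | rfl <;> simp [IsSign]

lemma isSign_sq {a : ℂ} (ha : IsSign a) : a * a = 1 := by
  rcases ha with rfl | rfl <;> norm_num

lemma neg_one_pow_congr' {m k : ℕ} (h : (m : ZMod 2) = (k : ZMod 2)) :
    ((-1:ℂ))^m = (-1)^k := by
  have h2 : m % 2 = k % 2 := by rwa [ZMod.natCast_eq_natCast_iff'] at h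
  conv_lhs => rw [← Nat.div_add_mod m 2, pow_add, pow_mul]
  conv_rhs => rw [← Nat.div_add_mod k 2, pow_add, pow_mul]
  rw [h2]; norm_num

lemma cast_sum_val {n : ℕ} (x y : V n) :
    ((∑ j, (x j).val * (y j).val : ℕ) : ZMod 2) = ∑ j, x j * y j := by
  push_cast
  simp

lemma zmod2_abcd (X Y : ZMod 2) : X + (X + (Y + Y)) = 0 := by revert X Y; decide

lemma pauliE_zero {n : ℕ} (z : V n) :
    PauliE (0:V n) z =
      Matrix.diagonal (fun v => (-1:ℂ) ^ (∑ j, (z j).val * (v j).val)) := by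
  ext u v
  simp only [PauliE, Matrix.of_apply, Matrix.diagonal_apply]
  simp only [Pi.zero_apply, ZMod.val_zero, zero_mul, Finset.sum_const_zero, pow_zero,
    one_mul, add_zero]
  by_cases h : u = v <;> simp [h]

lemma add_self_V {n : ℕ} (a : V n) : a + a = 0 := by
  funext j
  exact CharTwo.add_self_eq_zero _

lemma pauliE_sq {n : ℕ} (a b : V n) : PauliE a b * PauliE a b = 1 := by
  ext u v
  rw [Matrix.mul_apply]
  rw [Finset.sum_eq_single (v + a)]
  · simp only [PauliE, Matrix.of_apply]
    have hva : v + a + a = v := by rw [add_assoc, add_self_V, add_zero]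
    rw [hva]
    simp only [if_true, mul_one]
    by_cases h : u = v
    · subst h
      rw [if_pos rfl, mul_one, Matrix.one_apply_eq]
      have hI : Complex.I ^ (∑ j, (a j).val * (b j).val) *
          Complex.I ^ (∑ j, (a j).val * (b j).val)
          = (-1:ℂ) ^ (∑ j, (a j).val * (b j).val) := by
        rw [← pow_add, ← two_mul, pow_mul, Complex.I_sq]
      have hpar : ((-1:ℂ)) ^ ((∑ j, (a j).val * (b j).val) +
          ((∑ j, (b j).val * ((u + a) j).val) + (∑ j, (b j).val * (u j).val))) = 1 := by
        rw [neg_one_pow_congr' (k := 0)]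
        · exact pow_zero _
        · rw [Nat.cast_add, Nat.cast_add, cast_sum_val, cast_sum_val, cast_sum_val]
          have e1 : (∑ j, a j * b j) = ∑ j, b j * a j := by
            exact Finset.sum_congr rfl fun j _ => mul_comm _ _
          have e2 : (∑ j, b j * ((u + a) j)) =
              (∑ j, b j * a j) + ∑ j, b j * u j := by
            simp [Pi.add_apply, mul_add, Finset.sum_add_distrib, add_comm]
          rw [e1, e2]
          rw [Nat.cast_zero, add_assoc]
          exact zmod2_abcd _ _
      calc (Complex.I ^ (∑ j, (a j).val * (b j).val) *
              (-1:ℂ) ^ (∑ j, (b j).val * ((u + a) j).val)) *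
            (Complex.I ^ (∑ j, (a j).val * (b j).val) *
              (-1:ℂ) ^ (∑ j, (b j).val * (u j).val))
          = ((-1:ℂ) ^ (∑ j, (a j).val * (b j).val)) *
            ((-1:ℂ) ^ ((∑ j, (b j).val * ((u + a) j).val) + (∑ j, (b j).val * (u j).val))) := by
            rw [← hI, pow_add]; ring
        _ = 1 := by rw [← pow_add]; exact hpar
    · rw [if_neg (by simpa [hva] using h), Matrix.one_apply_ne h]; ring
  · intro w _ hw
    simp only [PauliE, Matrix.of_apply]
    rw [if_neg hw]; ring
  · intro h
    exact absurd (Finset.mem_univ _) h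

lemma I_pow_ne_zero (m : ℕ) : (Complex.I) ^ m ≠ 0 := pow_ne_zero _ Complex.I_ne_zero

lemma zmod2_xx (X : ZMod 2) : X + X = 0 := by revert X; decide

lemma pauli_mul_Z {n : ℕ} (a b z : V n)
    (h : ((∑ j, (a j).val * (z j).val : ℕ) : ZMod 2) = 0) :
    ∃ s : ℂ, IsSign s ∧
      PauliE a b * PauliE (0:V n) z = s • PauliE a (b + z) := by
  set A : ℕ := ∑ j, (a j).val * (b j).val with hA
  set B : ℕ := ∑ j, (a j).val * ((b + z) j).val with hB
  have hAB : ((A : ZMod 2)) = (B : ZMod 2) := by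
    rw [hA, hB, cast_sum_val, cast_sum_val]
    have : (∑ j, a j * ((b + z) j)) = (∑ j, a j * b j) + ∑ j, a j * z j := by
      simp [Pi.add_apply, mul_add, Finset.sum_add_distrib]
    rw [this, ← cast_sum_val a z, h, add_zero]
  refine ⟨Complex.I ^ A * (Complex.I ^ B)⁻¹, ?_, ?_⟩
  · have hs2 : (Complex.I ^ A * (Complex.I ^ B)⁻¹) * (Complex.I ^ A * (Complex.I ^ B)⁻¹) = 1 := by
      have h1 : Complex.I ^ A * Complex.I ^ A = (-1:ℂ) ^ A := by
        rw [← pow_add, ← two_mul, pow_mul, Complex.I_sq]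
      have h2 : Complex.I ^ B * Complex.I ^ B = (-1:ℂ) ^ B := by
        rw [← pow_add, ← two_mul, pow_mul, Complex.I_sq]
      have hne : ((-1:ℂ) ^ B) ≠ 0 := by
        apply pow_ne_zero; norm_num
      field_simp
      rw [sq, sq, h1, h2, neg_one_pow_congr' hAB]
    rcases mul_eq_zero.mp (show ((Complex.I ^ A * (Complex.I ^ B)⁻¹) - 1) *
        ((Complex.I ^ A * (Complex.I ^ B)⁻¹) + 1) = 0 by linear_combination hs2) with h1 | h1
    · exact Or.inl (by linear_combination h1)
    · exact Or.inr (by linear_combination h1)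
  · rw [pauliE_zero]
    ext u v
    rw [Matrix.mul_diagonal]
    simp only [PauliE, Matrix.of_apply, Matrix.smul_apply, smul_eq_mul]
    have hpow : ((-1:ℂ)) ^ (∑ j, ((b + z) j).val * (v j).val)
        = (-1:ℂ) ^ ((∑ j, (b j).val * (v j).val) + ∑ j, (z j).val * (v j).val) := by
      apply neg_one_pow_congr'
      rw [Nat.cast_add, cast_sum_val, cast_sum_val, cast_sum_val]
      simp [Pi.add_apply, add_mul, Finset.sum_add_distrib]
    rw [hpow, pow_add]
    have hIB : Complex.I ^ A * (Complex.I ^ B)⁻¹ * Complex.I ^ B = Complex.I ^ A := by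
      field_simp
    rw [← hA, ← hB]
    field_simp

lemma even_of_comm {n : ℕ} (a b z : V n)
    (h : PauliE (0:V n) z * PauliE a b = PauliE a b * PauliE (0:V n) z) :
    ((∑ j, (a j).val * (z j).val : ℕ) : ZMod 2) = 0 := by
  have h2 : (PauliE (0:V n) z * PauliE a b) a 0 = (PauliE a b * PauliE (0:V n) z) a 0 := by
    rw [h]
  rw [pauliE_zero, Matrix.diagonal_mul, Matrix.mul_diagonal] at h2
  simp only [PauliE, Matrix.of_apply] at h2
  have hE : (if a = 0 + a then (1:ℂ) else 0) = 1 := by rw [if_pos (by rw [zero_add])]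
  rw [hE] at h2
  have hz : (∑ j, (b j).val * ((0:V n) j).val) = 0 := by simp
  rw [hz, pow_zero] at h2
  have hz2 : (∑ j, (z j).val * ((0:V n) j).val) = 0 := by simp
  rw [hz2, pow_zero] at h2
  -- h2 : (-1)^{∑ z a} * (I^A * 1 * 1) = I^A * 1 * 1 * 1
  have hcancel : ((-1:ℂ)) ^ (∑ j, (z j).val * (a j).val) = 1 := by
    have hne := I_pow_ne_zero (∑ j, (a j).val * (b j).val)
    simp only [mul_one, one_mul] at h2
    exact mul_right_cancel₀ hne (by rw [one_mul]; exact h2)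
  rcases Nat.even_or_odd (∑ j, (z j).val * (a j).val) with he | ho
  · rw [cast_sum_val]
    have : (((∑ j, (z j).val * (a j).val : ℕ)) : ZMod 2) = 0 :=
      (ZMod.natCast_eq_zero_iff _ _).mpr he.two_dvd
    rw [cast_sum_val] at this
    rw [← this]
    exact Finset.sum_congr rfl fun j _ => mul_comm _ _
  · rw [ho.neg_one_pow] at hcancel
    norm_num at hcancel

/-- Let `S` be a stabilizer group (with `2^r` elements) whose code space
is preserved by transversal `T`. If `ε E(0,z)` commutes with every element of `S`, is not
in `S`, and adjoining it does not introduce `−I`, then the group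
`S' = S ∪ S·(εE(0,z))` generated by `S` and `εE(0,z)` is a stabilizer group with `2^{r+1}`
elements, `Π_{S'} = Π_S (I + εE(0,z))/2`, and transversal `T` still preserves `S'`. -/
theorem adjoin_Z_type_preserves_transversal_T (n r : ℕ)
    (S : Finset (Matrix (V n) (V n) ℂ))
    (hS : IsStabilizer n S) (hcard : S.card = 2 ^ r)
    (hT : transT n * stabProj S * (transT n)ᴴ = stabProj S)
    (z : V n) (ε : ℂ) (hε : IsSign ε)
    (hcomm : ∀ g ∈ S, (ε • PauliE 0 z) * g = g * (ε • PauliE 0 z))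
    (hnotin : ε • PauliE (0 : V n) z ∉ S)
    (hnoI : (-1 : Matrix (V n) (V n) ℂ) ∉
        S ∪ S.image (fun g => g * (ε • PauliE 0 z))) :
    IsStabilizer n (S ∪ S.image (fun g => g * (ε • PauliE 0 z))) ∧
    (S ∪ S.image (fun g => g * (ε • PauliE 0 z))).card = 2 ^ (r + 1) ∧
    stabProj (S ∪ S.image (fun g => g * (ε • PauliE 0 z))) =
      stabProj S * ((2 : ℂ)⁻¹ • (1 + ε • PauliE 0 z)) ∧
    transT n * stabProj (S ∪ S.image (fun g => g * (ε • PauliE 0 z))) * (transT n)ᴴ =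
      stabProj (S ∪ S.image (fun g => g * (ε • PauliE 0 z))) := by
    classical
  obtain ⟨hne, hform, hmul, hScomm, hnoneg⟩ := hS
  set P : Matrix (V n) (V n) ℂ := ε • PauliE (0:V n) z with hPdef
  have hPP : P * P = 1 := by
    rw [hPdef, Matrix.smul_mul, Matrix.mul_smul, pauliE_sq, smul_smul, isSign_sq hε, one_smul]
  have hgg : ∀ g ∈ S, g * g = 1 := by
    intro g hg
    obtain ⟨ε₁, a, b, hε₁, rfl⟩ := hform g hg
    rw [Matrix.smul_mul, Matrix.mul_smul, pauliE_sq, smul_smul, isSign_sq hε₁, one_smul]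
  have hzero : ∀ (ε₁ : ℂ) (a b : V n), IsSign ε₁ → (ε₁ • PauliE a b) ∈ S →
      ((∑ j, (a j).val * (z j).val : ℕ) : ZMod 2) = 0 := by
    intro ε₁ a b hε₁ hg
    apply even_of_comm a b z
    have hc := hcomm _ hg
    rw [hPdef, Matrix.smul_mul, Matrix.mul_smul, Matrix.smul_mul, Matrix.mul_smul,
      smul_smul, smul_smul, mul_comm ε₁ ε] at hc
    exact smul_right_injective _ (mul_ne_zero (isSign_ne_zero hε) (isSign_ne_zero hε₁)) hc
  have hgPform : ∀ g ∈ S, ∃ (ε' : ℂ) (a' b' : V n), IsSign ε' ∧ g * P = ε' • PauliE a' b' := by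
    intro g hg
    obtain ⟨ε₁, a, b, hε₁, rfl⟩ := hform g hg
    obtain ⟨s, hs, hprod⟩ := pauli_mul_Z a b z (hzero ε₁ a b hε₁ hg)
    refine ⟨ε₁ * (ε * s), a, b + z, isSign_mul hε₁ (isSign_mul hε hs), ?_⟩
    rw [hPdef, Matrix.smul_mul, Matrix.mul_smul, hprod, smul_smul, smul_smul, mul_assoc]
  have hPPmul : ∀ g ∈ S, ∀ h ∈ S, (g * P) * (h * P) = g * h := by
    intro g hg h hh
    rw [mul_assoc, ← mul_assoc P, hcomm h hh, mul_assoc, hPP, mul_one]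
  have hmulU : ∀ g ∈ S ∪ S.image (fun g => g * P), ∀ h ∈ S ∪ S.image (fun g => g * P),
      g * h ∈ S ∪ S.image (fun g => g * P) := by
    intro x hx y hy
    rw [Finset.mem_union] at hx hy ⊢
    rcases hx with hx | hx <;> rcases hy with hy | hy
    · exact Or.inl (hmul x hx y hy)
    · obtain ⟨h₀, hh₀, rfl⟩ := Finset.mem_image.mp hy
      refine Or.inr (Finset.mem_image.mpr ⟨x * h₀, hmul x hx h₀ hh₀, ?_⟩)
      rw [mul_assoc]
    · obtain ⟨g₀, hg₀, rfl⟩ := Finset.mem_image.mp hx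
      refine Or.inr (Finset.mem_image.mpr ⟨g₀ * y, hmul g₀ hg₀ y hy, ?_⟩)
      rw [mul_assoc, mul_assoc, hcomm y hy]
    · obtain ⟨g₀, hg₀, rfl⟩ := Finset.mem_image.mp hx
      obtain ⟨h₀, hh₀, rfl⟩ := Finset.mem_image.mp hy
      rw [hPPmul g₀ hg₀ h₀ hh₀]
      exact Or.inl (hmul _ hg₀ _ hh₀)
  have hkey : ∀ u ∈ S, ∀ w ∈ S, u * (w * P) = (w * P) * u := by
    intro u hu w hw
    rw [← mul_assoc, hScomm u hu w hw, mul_assoc, ← hcomm u hu, ← mul_assoc]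
  have hcommU : ∀ g ∈ S ∪ S.image (fun g => g * P), ∀ h ∈ S ∪ S.image (fun g => g * P),
      g * h = h * g := by
    intro x hx y hy
    rw [Finset.mem_union] at hx hy
    rcases hx with hx | hx <;> rcases hy with hy | hy
    · exact hScomm x hx y hy
    · obtain ⟨w, hw, rfl⟩ := Finset.mem_image.mp hy
      exact hkey x hx w hw
    · obtain ⟨w, hw, rfl⟩ := Finset.mem_image.mp hx
      exact (hkey y hy w hw).symm
    · obtain ⟨g₀, hg₀, rfl⟩ := Finset.mem_image.mp hx
      obtain ⟨h₀, hh₀, rfl⟩ := Finset.mem_image.mp hy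
      rw [hPPmul g₀ hg₀ h₀ hh₀, hPPmul h₀ hh₀ g₀ hg₀, hScomm g₀ hg₀ h₀ hh₀]
  have hformU : ∀ g ∈ S ∪ S.image (fun g => g * P),
      ∃ (ε' : ℂ) (a b : V n), IsSign ε' ∧ g = ε' • PauliE a b := by
    intro x hx
    rw [Finset.mem_union] at hx
    rcases hx with hx | hx
    · exact hform x hx
    · obtain ⟨g₀, hg₀, rfl⟩ := Finset.mem_image.mp hx
      obtain ⟨ε', a', b', h1, h2⟩ := hgPform g₀ hg₀
      exact ⟨ε', a', b', h1, h2⟩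
  have hinj : Set.InjOn (fun g => g * P) S := by
    intro x _ y _ hxy
    have h1 : x * P * P = y * P * P := by
      simpa using congrArg (fun m => m * P) hxy
    rwa [mul_assoc, mul_assoc, hPP, mul_one, mul_one] at h1
  have hdisj : Disjoint S (S.image fun g => g * P) := by
    rw [Finset.disjoint_right]
    intro x hx hxS
    obtain ⟨g, hg, rfl⟩ := Finset.mem_image.mp hx
    have hmem : g * (g * P) ∈ S := hmul _ hg _ hxS
    rw [← mul_assoc, hgg g hg, one_mul] at hmem
    exact hnotin hmem
  have hcardU : (S ∪ S.image fun g => g * P).card = 2 ^ (r + 1) := by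
    rw [Finset.card_union_of_disjoint hdisj, Finset.card_image_of_injOn hinj, hcard, pow_succ]
    ring
  have hsum : (∑ g ∈ S ∪ S.image (fun g => g * P), g)
      = (∑ g ∈ S, g) + ∑ g ∈ S, g * P := by
    rw [Finset.sum_union hdisj, Finset.sum_image fun x hx y hy h => hinj hx hy h]
  have hproj : stabProj (S ∪ S.image fun g => g * P)
      = stabProj S * ((2:ℂ)⁻¹ • (1 + P)) := by
    rw [stabProj, stabProj, hsum, hcardU, hcard]
    rw [Matrix.smul_mul, Matrix.mul_smul, smul_smul, mul_add, mul_one, Finset.sum_mul]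
    congr 1
    push_cast
    rw [pow_succ, mul_inv]
  have hPT : (1 + P) * (transT n)ᴴ = (transT n)ᴴ * (1 + P) := by
    rw [transT, Matrix.diagonal_conjTranspose, hPdef, pauliE_zero]
    rw [add_mul, mul_add, one_mul, mul_one, Matrix.smul_mul, Matrix.mul_smul,
      Matrix.diagonal_mul_diagonal, Matrix.diagonal_mul_diagonal]
    congr 2
    funext i
    ring_nf
  have hTfin : transT n * stabProj (S ∪ S.image fun g => g * P) * (transT n)ᴴ
      = stabProj (S ∪ S.image fun g => g * P) := by
    rw [hproj, Matrix.mul_smul, Matrix.mul_smul, Matrix.smul_mul]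
    congr 1
    rw [← mul_assoc, mul_assoc (transT n * stabProj S), hPT, ← mul_assoc, hT]
  exact ⟨⟨⟨hne.choose, Finset.mem_union_left _ hne.choose_spec⟩, hformU, hmulU, hcommU, hnoI⟩,
    hcardU, hproj, hTfin⟩
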